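/- Let M be a field of characteristic 2, y ∈ M nonzero, q = 2^n, and u in the separable closure of M with u^{q+1} + u^{-(q+1)} = y. Then the polynomial f(x) = ∏_{w ∈ F_q^×}(D_{q+1}(wx) - y) has exactly the q^2 - 1 distinct roots w·(ζu + (ζu)^{-1}) for w ∈ F_q^× and ζ a (q+1)-st root of unity. -/

import Mathlib

open Polynomial

noncomputable instance {n : ℕ} : Fintype (GaloisField 2 n)ˣ := Fintype.ofFinite _

lemma solve_quad {K : Type*} [Field K] [CharP K 2] [IsSepClosed K] (t : K) :
    ∃ z : K, z ≠ 0 ∧ z + z⁻¹ = t := by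
  by_cases ht : t = 0
  · exact ⟨1, one_ne_zero, by simp [ht, CharTwo.add_self_eq_zero]⟩
  · obtain ⟨z, hz⟩ := IsSepClosed.exists_root (X ^ 2 + C t * X + 1 : K[X])
      (by
        have : (X ^ 2 + C t * X + 1 : K[X]).degree = 2 := by
          compute_degree!
        simp [this])
      (by
        have hd : derivative (X ^ 2 + C t * X + 1 : K[X]) = C t := by
          simp [derivative_X_pow]
          ring_nf
          simp [CharTwo.two_eq_zero]
        rw [Polynomial.Separable, hd]
        exact ⟨0, C t⁻¹, by simp [← C_mul, inv_mul_cancel₀ ht]⟩)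
    have hz' : z ^ 2 + t * z + 1 = 0 := by simpa [IsRoot] using hz
    have hz0 : z ≠ 0 := by rintro rfl; simp at hz'
    refine ⟨z, hz0, ?_⟩
    field_simp
    linear_combination hz' - t * z * (CharP.cast_eq_zero K 2)

lemma two_roots {K : Type*} [Field K] {S s : K} (hS : S ≠ 0) (hs : s ≠ 0)
    (h : S + S⁻¹ = s + s⁻¹) : S = s ∨ S = s⁻¹ := by
  have h0 : (S - s) * (S - s⁻¹) = 0 := by
    have hss : s * s⁻¹ = 1 := mul_inv_cancel₀ hs
    have hSS : S * S⁻¹ = 1 := mul_inv_cancel₀ hS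
    have h' : S * (S + S⁻¹) = S * (s + s⁻¹) := by rw [h]
    linear_combination h' - hSS + hss
  rcases mul_eq_zero.1 h0 with h1 | h1
  · exact Or.inl (sub_eq_zero.1 h1)
  · exact Or.inr (sub_eq_zero.1 h1)


lemma cancel_lemma {K : Type*} [Field K] [CharP K 2] (A₁ A₂ z₁ z₂ s : K)
    (hs0 : s ≠ 0) (hz₁0 : z₁ ≠ 0) (hz₂0 : z₂ ≠ 0) (hs1 : s ^ 2 + 1 ≠ 0)
    (e1 : A₁ * (z₁ + z₁⁻¹) = A₂ * (z₂ + z₂⁻¹))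
    (e2 : A₁ * (s * z₁⁻¹ + (s * z₁⁻¹)⁻¹) = A₂ * (s * z₂⁻¹ + (s * z₂⁻¹)⁻¹)) :
    A₁ * z₂ = A₂ * z₁ := by
  have h2 : (2 : K) = 0 := CharP.cast_eq_zero K 2
  have key : A₁ * z₂ * ((s ^ 2 + 1) * s) = A₂ * z₁ * ((s ^ 2 + 1) * s) := by
    field_simp at e1 e2
    linear_combination s * e2 - s * e1 + s * (A₁ * z₂ - A₂ * z₁) * h2
  exact mul_right_cancel₀ (mul_ne_zero hs1 hs0) key

theorem roots_of_dickson_product (n : ℕ) (hn : 0 < n) (q : ℕ) (hq : q = 2 ^ n)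
    (M : Type*) [Field M] [CharP M 2] (y : M) (hy : y ≠ 0)
    (K : Type*) [Field K] [Algebra M K]
    [IsSepClosure M K] [Algebra (GaloisField 2 n) K]
    (u : K) (hu : u ≠ 0) (huy : u ^ (q + 1) + (u ^ (q + 1))⁻¹ = algebraMap M K y)
    (f : Polynomial K)
    (hf : f = ∏ w : (GaloisField 2 n)ˣ,
        (((dickson 1 (1 : GaloisField 2 n) (q + 1)).map
            (algebraMap (GaloisField 2 n) K)).comp
          (Polynomial.C (algebraMap (GaloisField 2 n) K w) * Polynomial.X)
          - Polynomial.C (algebraMap M K y))) :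
    (∀ x : K, f.IsRoot x ↔
        ∃ (w : (GaloisField 2 n)ˣ) (ζ : K), ζ ^ (q + 1) = 1 ∧
          x = algebraMap (GaloisField 2 n) K w * (ζ * u + (ζ * u)⁻¹)) ∧
    (∀ (w₁ w₂ : (GaloisField 2 n)ˣ) (ζ₁ ζ₂ : K), ζ₁ ^ (q + 1) = 1 → ζ₂ ^ (q + 1) = 1 →
        algebraMap (GaloisField 2 n) K w₁ * (ζ₁ * u + (ζ₁ * u)⁻¹)
          = algebraMap (GaloisField 2 n) K w₂ * (ζ₂ * u + (ζ₂ * u)⁻¹) →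
        w₁ = w₂ ∧ ζ₁ = ζ₂) := by
  haveI h2K : CharP K 2 := charP_of_injective_algebraMap (algebraMap M K).injective 2
  haveI : IsSepClosed K := IsSepClosure.sep_closed M
  set φ := algebraMap (GaloisField 2 n) K with hφ
  set y' := algebraMap M K y with hy'def
  have hy' : y' ≠ 0 := fun h => hy ((_root_.map_eq_zero _).1 h)
  set s := u ^ (q + 1) with hs
  have hs0 : s ≠ 0 := pow_ne_zero _ hu
  have hsy : s + s⁻¹ = y' := huy
  -- Frobenius facts
  haveI : Fintype (GaloisField 2 n) := Fintype.ofFinite _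
  have hcard : Fintype.card (GaloisField 2 n) = q := by
    rw [← Nat.card_eq_fintype_card, GaloisField.card 2 n hn.ne', hq]
  have hGF : ∀ g : GaloisField 2 n, g ^ q = g := fun g => by
    rw [← hcard]; exact FiniteField.pow_card g
  have hA : ∀ w : (GaloisField 2 n)ˣ, (φ w) ^ q = φ w := fun w => by
    rw [← map_pow, hGF]
  have hA0 : ∀ w : (GaloisField 2 n)ˣ, φ w ≠ 0 := fun w =>
    fun h => w.ne_zero ((_root_.map_eq_zero φ).1 h)
  -- Dickson evaluation identity
  have dick : ∀ z : K, z ≠ 0 →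
      ((dickson 1 (1 : GaloisField 2 n) (q + 1)).map φ).eval (z + z⁻¹)
        = z ^ (q + 1) + (z ^ (q + 1))⁻¹ := by
    intro z hz
    rw [map_dickson, map_one, dickson_one_one_eval_add_inv z z⁻¹ (mul_inv_cancel₀ hz),
      inv_pow]
  -- evaluation of each factor
  have hfac : ∀ (w : (GaloisField 2 n)ˣ) (x : K),
      (((dickson 1 (1 : GaloisField 2 n) (q + 1)).map φ).comp (C (φ w) * X) - C y').eval x
        = ((dickson 1 (1 : GaloisField 2 n) (q + 1)).map φ).eval (φ w * x) - y' := by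
    intro w x
    simp [eval_comp]
  constructor
  · intro x
    subst hf
    rw [isRoot_prod]
    constructor
    · rintro ⟨w, -, hw⟩
      have hw' : ((dickson 1 (1 : GaloisField 2 n) (q + 1)).map φ).eval (φ w * x) = y' := by
        have h := hfac w x
        rw [IsRoot] at hw
        rw [hw] at h
        exact sub_eq_zero.1 h.symm
      obtain ⟨z, hz0, hzt⟩ := solve_quad (φ w * x)
      have hzq : z ^ (q + 1) + (z ^ (q + 1))⁻¹ = s + s⁻¹ := by
        rw [← dick z hz0, hzt, hw']
        exact hsy.symm
      obtain ⟨z, hz0, hzt, hzs⟩ : ∃ z : K, z ≠ 0 ∧ z + z⁻¹ = φ w * x ∧ z ^ (q + 1) = s := by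
        rcases two_roots (pow_ne_zero _ hz0) hs0 hzq with h | h
        · exact ⟨z, hz0, hzt, h⟩
        · refine ⟨z⁻¹, inv_ne_zero hz0, by rw [inv_inv, add_comm]; exact hzt, ?_⟩
          rw [inv_pow, h, inv_inv]
      refine ⟨w⁻¹, z * u⁻¹, ?_, ?_⟩
      · rw [mul_pow, hzs, inv_pow, hs]
        exact mul_inv_cancel₀ (pow_ne_zero _ hu)
      · have : (z * u⁻¹) * u = z := by field_simp
        rw [this]
        have hwinv : φ ↑w⁻¹ = (φ ↑w)⁻¹ := by
          rw [← map_inv₀]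
          norm_cast
        rw [hwinv, hzt, inv_mul_cancel_left₀ (hA0 w)]
    · rintro ⟨w, ζ, hζ, rfl⟩
      have hζ0 : ζ ≠ 0 := fun h => by simp [h, zero_pow] at hζ
      have hzu0 : ζ * u ≠ 0 := mul_ne_zero hζ0 hu
      refine ⟨w⁻¹, Finset.mem_univ _, ?_⟩
      rw [IsRoot, hfac]
      have hwinv : φ ↑w⁻¹ = (φ ↑w)⁻¹ := by rw [← map_inv₀]; norm_cast
      rw [hwinv, inv_mul_cancel_left₀ (hA0 w), dick _ hzu0, mul_pow, hζ, one_mul, ← hs, hsy,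
        sub_self]
  · intro w₁ w₂ ζ₁ ζ₂ hζ₁ hζ₂ heq
    have hζ₁0 : ζ₁ ≠ 0 := fun h => by simp [h, zero_pow] at hζ₁
    have hζ₂0 : ζ₂ ≠ 0 := fun h => by simp [h, zero_pow] at hζ₂
    set A₁ := φ ↑w₁ with hA₁
    set A₂ := φ ↑w₂ with hA₂
    set z₁ := ζ₁ * u with hz₁
    set z₂ := ζ₂ * u with hz₂
    have hz₁0 : z₁ ≠ 0 := mul_ne_zero hζ₁0 hu
    have hz₂0 : z₂ ≠ 0 := mul_ne_zero hζ₂0 hu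
    have hz₁s : z₁ ^ (q + 1) = s := by rw [hz₁, mul_pow, hζ₁, one_mul]
    have hz₂s : z₂ ^ (q + 1) = s := by rw [hz₂, mul_pow, hζ₂, one_mul]
    have hz₁q : z₁ ^ q = s * z₁⁻¹ := by
      field_simp
      rw [← pow_succ]; exact hz₁s
    have hz₂q : z₂ ^ q = s * z₂⁻¹ := by
      field_simp
      rw [← pow_succ]; exact hz₂s
    -- raise heq to the q-th power
    have eq2 : A₁ * (s * z₁⁻¹ + (s * z₁⁻¹)⁻¹) = A₂ * (s * z₂⁻¹ + (s * z₂⁻¹)⁻¹) := by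
      have := congrArg (· ^ q) heq
      simp only [hq] at this
      rw [mul_pow, mul_pow, add_pow_char_pow, add_pow_char_pow] at this
      rw [← hq] at this
      rwa [hA w₁, hA w₂, inv_pow, inv_pow, hz₁q, hz₂q] at this
    have hs1 : s ^ 2 + 1 ≠ 0 := by
      have : s ^ 2 + 1 = s * y' := by
        rw [← hsy]; field_simp
      rw [this]
      exact mul_ne_zero hs0 hy'
    have hAz : A₁ * z₂ = A₂ * z₁ := cancel_lemma A₁ A₂ z₁ z₂ s hs0 hz₁0 hz₂0 hs1 heq eq2
    have hApow : A₁ ^ 2 * s = A₂ ^ 2 * s := by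
      have := congrArg (· ^ (q + 1)) hAz
      simp only [mul_pow] at this
      rw [hz₁s, hz₂s, pow_succ, hA w₁, pow_succ, hA w₂] at this
      rw [sq, sq]
      exact this
    have hAA : A₁ = A₂ := by
      have h1 : A₁ ^ 2 = A₂ ^ 2 := mul_right_cancel₀ hs0 hApow
      exact frobenius_inj K 2 (by rwa [frobenius_def, frobenius_def])
    have hw : w₁ = w₂ := by
      ext
      exact φ.injective hAA
    refine ⟨hw, ?_⟩
    have hz : z₁ = z₂ := by
      have := hAz
      rw [hAA] at this
      exact (mul_left_cancel₀ (hA0 w₂) this).symm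
    exact mul_right_cancel₀ hu (by rw [← hz₁, ← hz₂, hz])
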